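/- arXiv:2305.13537 — 2 statements merged into one kernel-verified Lean document; each statement's English description precedes it below -/
import Mathlib

section
/- Assume conditions (⋆) and (⋆⋆) of Proposition 3 and that 1̄ = 1. If (1, b) ∈ C₁ for every b ∈ B, then the parallel pair (m∘φ, m∘θ) : C₂ ⇉ C₁ is bi-exact in the category of types; concretely, the commutative square with d(x, b) = b, c(x, b) = g(x, b) (note m∘φ(y, x, b) = (y, g(x, b)) and m∘θ(y, x, b) = (x, b), so c∘(m∘θ) = d∘(m∘φ)) is both a pullback and a pushout square of types, and the set-theoretic pullback C₃ of the span (m∘φ, m∘θ) with its two projections forms a square which is both a pullback and a pushout. -/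
universe u

section Link

variable {X B : Type u}

/-- The subset `C₁ = {(x, b) : f(x, b, 1, 0) = x = f(1, 0, x, b)}`. -/
def linkC1 (f : X → B → X → B → X) (one : X) (zero : B) : Set (X × B) :=
  {p | f p.1 p.2 one zero = p.1 ∧ f one zero p.1 p.2 = p.1}

/-- The subset `C₂ = {(y, x, b) : (y, g(x, b)) ∈ C₁ and (x, b) ∈ C₁}`. -/
def linkC2 (f : X → B → X → B → X) (g : X → B → B) (one : X) (zero : B) :
    Set (X × X × B) :=
  {t | ((t.1, g t.2.1 t.2.2) : X × B) ∈ linkC1 f one zero ∧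
    ((t.2.1, t.2.2) : X × B) ∈ linkC1 f one zero}

/-- `m(y, x, b) = (y·x, b)`. -/
def linkM (mul : X → X → X) : X × X × B → X × B :=
  fun t => (mul t.1 t.2.1, t.2.2)

/-- `θ(y, x, b) = (ȳ, y·x, b)`. -/
def linkθ (mul : X → X → X) (bar : X → X) : X × X × B → X × X × B :=
  fun t => (bar t.1, mul t.1 t.2.1, t.2.2)

/-- `φ(y, x, b) = (y·x, x̄, g(ȳ·(y·x), b))`. -/
def linkφ (mul : X → X → X) (bar : X → X) (g : X → B → B) :
    X × X × B → X × X × B :=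
  fun t => (mul t.1 t.2.1, bar t.2.1, g (mul (bar t.1) (mul t.1 t.2.1)) t.2.2)

section Closure

variable (mul : X → X → X) (one : X) (zero : B) (bar : X → X)
  (f : X → B → X → B → X) (g : X → B → B)

/-- Proposition 2 (well-definedness of `m`): if `(y, x, b) ∈ C₂` then
`(y·x, b) ∈ C₁`. -/
theorem linkM_mem
    (hf : ∀ y x b y' x' b', f (mul y x) b (mul y' x') b' =
      mul (f y (g x b) y' (g x' b')) (f x b x' b'))
    (hg10 : g one zero = zero) (h11 : mul one one = one) :
    ∀ t ∈ linkC2 f g one zero, linkM mul t ∈ linkC1 f one zero := by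
  rintro ⟨y, x, b⟩ ⟨⟨h1a, h1b⟩, h2a, h2b⟩
  constructor
  · show f (mul y x) b one zero = mul y x
    calc f (mul y x) b one zero = f (mul y x) b (mul one one) zero := by rw [h11]
      _ = mul (f y (g x b) one (g one zero)) (f x b one zero) := hf ..
      _ = mul y x := by rw [hg10, h1a, h2a]
  · show f one zero (mul y x) b = mul y x
    calc f one zero (mul y x) b = f (mul one one) zero (mul y x) b := by rw [h11]
      _ = mul (f one (g one zero) y (g x b)) (f one zero x b) := hf ..
      _ = mul y x := by rw [hg10, h1b, h2b]

/-- Closure of `C₂` under `θ`. -/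
theorem linkθ_mem
    (hf : ∀ y x b y' x' b', f (mul y x) b (mul y' x') b' =
      mul (f y (g x b) y' (g x' b')) (f x b x' b'))
    (hg : ∀ y x b, g (mul y x) b = g y (g x b))
    (hg10 : g one zero = zero) (h11 : mul one one = one)
    (hstar : ∀ x b, ((x, b) : X × B) ∈ linkC1 f one zero →
      ((bar x, g x b) : X × B) ∈ linkC1 f one zero) :
    ∀ t ∈ linkC2 f g one zero, linkθ mul bar t ∈ linkC2 f g one zero := by
  rintro ⟨y, x, b⟩ ht
  constructor
  · show ((bar y, g (mul y x) b) : X × B) ∈ linkC1 f one zero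
    rw [hg]
    exact hstar y (g x b) ht.1
  · exact linkM_mem mul one zero f g hf hg10 h11 _ ht

/-- Closure of `C₂` under `φ`. -/
theorem linkφ_mem
    (hf : ∀ y x b y' x' b', f (mul y x) b (mul y' x') b' =
      mul (f y (g x b) y' (g x' b')) (f x b x' b'))
    (hg : ∀ y x b, g (mul y x) b = g y (g x b))
    (hg10 : g one zero = zero) (h11 : mul one one = one)
    (hiv' : ∀ x b, g (mul (bar x) x) b = b)
    (hstar : ∀ x b, ((x, b) : X × B) ∈ linkC1 f one zero →
      ((bar x, g x b) : X × B) ∈ linkC1 f one zero)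
    (hcancel : ∀ t ∈ linkC2 f g one zero, mul (bar t.1) (mul t.1 t.2.1) = t.2.1) :
    ∀ t ∈ linkC2 f g one zero, linkφ mul bar g t ∈ linkC2 f g one zero := by
  rintro ⟨y, x, b⟩ ht
  have hx : mul (bar y) (mul y x) = x := hcancel _ ht
  constructor
  · show ((mul y x, g (bar x) (g (mul (bar y) (mul y x)) b)) : X × B) ∈
      linkC1 f one zero
    rw [hx, ← hg, hiv']
    exact linkM_mem mul one zero f g hf hg10 h11 _ ht
  · show ((bar x, g (mul (bar y) (mul y x)) b) : X × B) ∈ linkC1 f one zero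
    rw [hx]
    exact hstar x b ht.2

end Closure

/-- `m` as a map `C₂ → C₁`, given the closure property. -/
def linkMS {f : X → B → X → B → X} {g : X → B → B} {one : X} {zero : B}
    (mul : X → X → X)
    (hm : ∀ t ∈ linkC2 f g one zero, linkM mul t ∈ linkC1 f one zero) :
    linkC2 f g one zero → linkC1 f one zero :=
  fun t => ⟨linkM mul t.1, hm t.1 t.2⟩

/-- `θ` as a map `C₂ → C₂`, given the closure property. -/
def linkθS {f : X → B → X → B → X} {g : X → B → B} {one : X} {zero : B}
    (mul : X → X → X) (bar : X → X)
    (hθ : ∀ t ∈ linkC2 f g one zero, linkθ mul bar t ∈ linkC2 f g one zero) :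
    linkC2 f g one zero → linkC2 f g one zero :=
  fun t => ⟨linkθ mul bar t.1, hθ t.1 t.2⟩

/-- `φ` as a map `C₂ → C₂`, given the closure property. -/
def linkφS {f : X → B → X → B → X} {g : X → B → B} {one : X} {zero : B}
    (mul : X → X → X) (bar : X → X)
    (hφ : ∀ t ∈ linkC2 f g one zero, linkφ mul bar g t ∈ linkC2 f g one zero) :
    linkC2 f g one zero → linkC2 f g one zero :=
  fun t => ⟨linkφ mul bar g t.1, hφ t.1 t.2⟩

end Link

open CategoryTheory in
/-- A commutative square of types which is both a pullback and a pushout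
(an exact / bicartesian / Dolittle / pulation square). -/
def Bicartesian {P X Y Z : Type u} (fst : P → X) (snd : P → Y)
    (f : X → Z) (g : Y → Z) : Prop :=
  CategoryTheory.IsPullback (C := Type u) (TypeCat.ofHom fst) (TypeCat.ofHom snd)
      (TypeCat.ofHom f) (TypeCat.ofHom g) ∧
    CategoryTheory.IsPushout (C := Type u) (TypeCat.ofHom fst) (TypeCat.ofHom snd)
      (TypeCat.ofHom f) (TypeCat.ofHom g)

/-- A pair of parallel maps is *jointly monomorphic*. -/
def JointlyMono {A B C : Type u} (f : A → B) (g : A → C) : Prop :=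
  ∀ a a', f a = f a' → g a = g a' → a = a'

/-- An involutive-2-link `(θ, φ, m)` is *unital* (Definition 1(1)). -/
def IsUnitalLink {C₂ C₁ : Type u} (θ φ : C₂ → C₂) (m : C₂ → C₁) : Prop :=
  JointlyMono m (m ∘ θ) ∧ JointlyMono m (m ∘ φ) ∧
  ∃ e₁ e₂ : C₁ → C₂,
    m ∘ e₁ = id ∧ m ∘ e₂ = id ∧
    θ ∘ e₂ = e₂ ∧ φ ∘ e₁ = e₁ ∧
    m ∘ θ ∘ φ ∘ e₂ = m ∘ φ ∘ θ ∘ e₁ ∧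
    (m ∘ θ ∘ e₁) ∘ (m ∘ φ) = (m ∘ φ ∘ e₂) ∘ (m ∘ θ) ∧
    (m ∘ θ ∘ e₁) ∘ m = (m ∘ θ ∘ e₁) ∘ (m ∘ θ) ∧
    (m ∘ φ ∘ e₂) ∘ m = (m ∘ φ ∘ e₂) ∘ (m ∘ φ)

/-- An involutive-2-link `(θ, φ, m)` is *associative* (Definition 1(2)). -/
def IsAssociativeLink {C₂ C₁ : Type u} (θ φ : C₂ → C₂) (m : C₂ → C₁) : Prop :=
  ∃ (C₀ : Type u) (d c : C₁ → C₀) (C₃ : Type u) (p₁ p₂ : C₃ → C₂),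
    Bicartesian (m ∘ φ) (m ∘ θ) d c ∧
    Bicartesian p₂ p₁ (m ∘ φ) (m ∘ θ) ∧
    ∃ m₁ m₂ : C₃ → C₂,
      (m ∘ φ) ∘ m₁ = m ∘ p₁ ∧ (m ∘ θ) ∘ m₁ = (m ∘ θ) ∘ p₂ ∧
      (m ∘ φ) ∘ m₂ = (m ∘ φ) ∘ p₁ ∧ (m ∘ θ) ∘ m₂ = m ∘ p₂ ∧
      m ∘ m₁ = m ∘ m₂

/-- The set-theoretic pullback `C₃` of the parallel pair `(π₁, π₂)`
(the object of composable triples). -/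
def linkC3 {A C : Type u} (π₁ π₂ : A → C) : Type u :=
  {q : A × A // π₁ q.2 = π₂ q.1}

/-- First projection `p₁ : C₃ → C₂`. -/
def linkP1 {A C : Type u} (π₁ π₂ : A → C) : linkC3 π₁ π₂ → A := fun q => q.1.1

/-- Second projection `p₂ : C₃ → C₂`. -/
def linkP2 {A C : Type u} (π₁ π₂ : A → C) : linkC3 π₁ π₂ → A := fun q => q.1.2


open CategoryTheory Limits in
theorem types_isPullback_of {P X Y Z : Type u} {fst : P → X} {snd : P → Y}
    {f : X → Z} {g : Y → Z} (comm : ∀ p, f (fst p) = g (snd p))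
    (h : ∀ x y, f x = g y → ∃! p, fst p = x ∧ snd p = y) :
    CategoryTheory.IsPullback (C := Type u) (TypeCat.ofHom fst) (TypeCat.ofHom snd)
      (TypeCat.ofHom f) (TypeCat.ofHom g) := by
  have w : (TypeCat.ofHom fst ≫ TypeCat.ofHom f : P ⟶ Z) = TypeCat.ofHom snd ≫ TypeCat.ofHom g :=
    ConcreteCategory.hom_ext _ _ comm
  exact IsPullback.of_isLimit (PullbackCone.IsLimit.mk w
    (fun s => TypeCat.ofHom fun w =>
      (h (s.fst w) (s.snd w) (ConcreteCategory.congr_hom s.condition w)).choose)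
    (fun s => ConcreteCategory.hom_ext _ _ fun (w : s.pt) =>
      (h (s.fst w) (s.snd w) (ConcreteCategory.congr_hom s.condition w)).choose_spec.1.1)
    (fun s => ConcreteCategory.hom_ext _ _ fun (w : s.pt) =>
      (h (s.fst w) (s.snd w) (ConcreteCategory.congr_hom s.condition w)).choose_spec.1.2)
    (fun s m hm1 hm2 => ConcreteCategory.hom_ext _ _ fun (w : s.pt) =>
      (h (s.fst w) (s.snd w) (ConcreteCategory.congr_hom s.condition w)).choose_spec.2 (m w)
        ⟨ConcreteCategory.congr_hom hm1 w, ConcreteCategory.congr_hom hm2 w⟩))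

open CategoryTheory Limits in
theorem types_isPushout_of {P X Y Z : Type u} {fst : P → X} {snd : P → Y}
    {f : X → Z} {g : Y → Z} (comm : ∀ p, f (fst p) = g (snd p))
    (h : ∀ (W : Type u) (u : X → W) (v : Y → W), (∀ p, u (fst p) = v (snd p)) →
      ∃! w : Z → W, (∀ x, w (f x) = u x) ∧ (∀ y, w (g y) = v y)) :
    CategoryTheory.IsPushout (C := Type u) (TypeCat.ofHom fst) (TypeCat.ofHom snd)
      (TypeCat.ofHom f) (TypeCat.ofHom g) := by
  have w : (TypeCat.ofHom fst ≫ TypeCat.ofHom f : P ⟶ Z) = TypeCat.ofHom snd ≫ TypeCat.ofHom g :=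
    ConcreteCategory.hom_ext _ _ comm
  exact IsPushout.of_isColimit (PushoutCocone.IsColimit.mk w
    (fun s => TypeCat.ofHom
      (h _ s.inl s.inr (fun p => ConcreteCategory.congr_hom s.condition p)).choose)
    (fun s => ConcreteCategory.hom_ext _ _ fun x =>
      (h _ s.inl s.inr (fun p => ConcreteCategory.congr_hom s.condition p)).choose_spec.1.1 x)
    (fun s => ConcreteCategory.hom_ext _ _ fun y =>
      (h _ s.inl s.inr (fun p => ConcreteCategory.congr_hom s.condition p)).choose_spec.1.2 y)
    (fun s m hm1 hm2 => ConcreteCategory.hom_ext _ _ fun z => congrFun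
      ((h _ s.inl s.inr (fun p => ConcreteCategory.congr_hom s.condition p)).choose_spec.2 m
        ⟨fun x => ConcreteCategory.congr_hom hm1 x, fun y => ConcreteCategory.congr_hom hm2 y⟩) z))

/-- **Proposition 4** (first part). Assuming (⋆), (⋆⋆), `1̄ = 1` and
`(1, b) ∈ C₁` for every `b`, the pair `(m∘φ, m∘θ)` is bi-exact:
`m∘φ(y,x,b) = (y, g(x,b))` and `m∘θ(y,x,b) = (x,b)`, the square with
`d(x,b) = b` and `c(x,b) = g(x,b)` is bicartesian, and so is the square
given by the set-theoretic pullback `C₃` with its two projections. -/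
theorem biexact_of_link {X B : Type u} (mul : X → X → X) (one : X) (zero : B)
    (bar : X → X) (f : X → B → X → B → X) (g : X → B → B)
    (hf : ∀ y x b y' x' b', f (mul y x) b (mul y' x') b' =
      mul (f y (g x b) y' (g x' b')) (f x b x' b'))
    (hg : ∀ y x b, g (mul y x) b = g y (g x b))
    (hg10 : g one zero = zero) (h11 : mul one one = one)
    (hiv : ∀ x y b, g (mul (bar x) (mul (bar y) (mul y x))) b = b)
    (hiv' : ∀ x b, g (mul (bar x) x) b = b)
    (hstar : ∀ x b, ((x, b) : X × B) ∈ linkC1 f one zero →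
      ((bar x, g x b) : X × B) ∈ linkC1 f one zero ∧ bar (bar x) = x)
    (hstarstar : ∀ t ∈ linkC2 f g one zero,
      mul (bar t.1) (mul t.1 t.2.1) = t.2.1 ∧
      mul (mul t.1 t.2.1) (bar t.2.1) = t.1 ∧
      mul t.2.1 (bar (mul t.1 t.2.1)) = bar t.1 ∧
      mul (bar (mul t.1 t.2.1)) t.1 = bar t.2.1)
    (hbar1 : bar one = one)
    (h1b : ∀ b, ((one, b) : X × B) ∈ linkC1 f one zero) :
    ∀ (hm : ∀ t ∈ linkC2 f g one zero, linkM mul t ∈ linkC1 f one zero)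
      (hθc : ∀ t ∈ linkC2 f g one zero, linkθ mul bar t ∈ linkC2 f g one zero)
      (hφc : ∀ t ∈ linkC2 f g one zero, linkφ mul bar g t ∈ linkC2 f g one zero),
      (∀ t : linkC2 f g one zero,
        (linkMS mul hm (linkφS mul bar hφc t) : X × B) =
          (t.1.1, g t.1.2.1 t.1.2.2)) ∧
      (∀ t : linkC2 f g one zero,
        (linkMS mul hm (linkθS mul bar hθc t) : X × B) =
          (t.1.2.1, t.1.2.2)) ∧
      Bicartesian (linkMS mul hm ∘ linkφS mul bar hφc)
        (linkMS mul hm ∘ linkθS mul bar hθc)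
        (fun p => (p : X × B).2) (fun p => g (p : X × B).1 (p : X × B).2) ∧
      Bicartesian
        (linkP2 (linkMS mul hm ∘ linkφS mul bar hφc)
          (linkMS mul hm ∘ linkθS mul bar hθc))
        (linkP1 (linkMS mul hm ∘ linkφS mul bar hφc)
          (linkMS mul hm ∘ linkθS mul bar hθc))
        (linkMS mul hm ∘ linkφS mul bar hφc)
        (linkMS mul hm ∘ linkθS mul bar hθc) := by
  intro hm hθc hφc
  set π₁ := linkMS mul hm ∘ linkφS mul bar hφc with hπ₁
  set π₂ := linkMS mul hm ∘ linkθS mul bar hθc with hπ₂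
  -- g one c = c
  have hg1 : ∀ c : B, g one c = c := by
    intro c
    have := hiv' one c
    rwa [hbar1, h11] at this
  -- computation of π₁ and π₂
  have eq1 : ∀ t : linkC2 f g one zero,
      (π₁ t : X × B) = (t.1.1, g t.1.2.1 t.1.2.2) := by
    rintro ⟨⟨y, x, b⟩, ht⟩
    obtain ⟨h1, h2, h3, h4⟩ := hstarstar _ ht
    show (mul (mul y x) (bar x), g (mul (bar y) (mul y x)) b) = (y, g x b)
    rw [h1, h2]
  have eq2 : ∀ t : linkC2 f g one zero,
      (π₂ t : X × B) = (t.1.2.1, t.1.2.2) := by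
    rintro ⟨⟨y, x, b⟩, ht⟩
    obtain ⟨h1, _⟩ := hstarstar _ ht
    show (mul (bar y) (mul y x), b) = (x, b)
    rw [h1]
  -- membership of special triples
  have memA : ∀ p : linkC1 f one zero,
      ((p.1.1, one, p.1.2) : X × X × B) ∈ linkC2 f g one zero := by
    intro p
    refine ⟨?_, h1b p.1.2⟩
    show ((p.1.1, g one p.1.2) : X × B) ∈ linkC1 f one zero
    rw [hg1]
    have := p.2
    simpa [linkC1] using this
  have memB : ∀ p : linkC1 f one zero,
      ((one, p.1.1, p.1.2) : X × X × B) ∈ linkC2 f g one zero := by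
    intro p
    refine ⟨h1b _, ?_⟩
    have := p.2
    simpa [linkC1] using this
  -- special elements of C₂
  have eA : ∀ p : linkC1 f one zero, π₁ (⟨(p.1.1, one, p.1.2), memA p⟩) = p := by
    intro p
    apply Subtype.ext
    rw [eq1]
    show (p.1.1, g one p.1.2) = p.1
    rw [hg1]
  have eB : ∀ p : linkC1 f one zero, π₂ (⟨(one, p.1.1, p.1.2), memB p⟩) = p := by
    intro p
    apply Subtype.ext
    rw [eq2]
  -- commutativity of square 1
  have comm1 : ∀ t : linkC2 f g one zero,
      ((π₁ t : X × B)).2 = g ((π₂ t : X × B)).1 ((π₂ t : X × B)).2 := by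
    intro t
    rw [eq1, eq2]
  refine ⟨eq1, eq2, ⟨?_, ?_⟩, ⟨?_, ?_⟩⟩
  · -- square 1 pullback
    apply types_isPullback_of comm1
    intro p q hpq
    have hmem : ((p.1.1, q.1.1, q.1.2) : X × X × B) ∈ linkC2 f g one zero := by
      refine ⟨?_, ?_⟩
      · show ((p.1.1, g q.1.1 q.1.2) : X × B) ∈ linkC1 f one zero
        rw [← hpq]
        have := p.2
        simpa [linkC1] using this
      · have := q.2
        simpa [linkC1] using this
    refine ⟨⟨(p.1.1, q.1.1, q.1.2), hmem⟩, ⟨?_, ?_⟩, ?_⟩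
    · apply Subtype.ext
      rw [eq1]
      show (p.1.1, g q.1.1 q.1.2) = p.1
      rw [← hpq]
    · apply Subtype.ext
      rw [eq2]
    · rintro ⟨⟨y', x', b'⟩, ht'⟩ ⟨h1, h2⟩
      apply Subtype.ext
      have e2 : ((x', b') : X × B) = q.1 := by
        have := congrArg Subtype.val h2
        rwa [eq2] at this
      have e1 : ((y', g x' b') : X × B) = p.1 := by
        have := congrArg Subtype.val h1
        rwa [eq1] at this
      show ((y', x', b') : X × X × B) = (p.1.1, q.1.1, q.1.2)
      have hy : y' = p.1.1 := congrArg Prod.fst e1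
      have hx : x' = q.1.1 := congrArg Prod.fst e2
      have hb : b' = q.1.2 := congrArg Prod.snd e2
      rw [hy, hx, hb]
  · -- square 1 pushout
    apply types_isPushout_of comm1
    intro W u v hc
    -- key: u p = v (one, p.1.2)
    have key : ∀ p : linkC1 f one zero,
        u p = v ⟨(one, p.1.2), h1b p.1.2⟩ := by
      intro p
      have ht := hc ⟨(p.1.1, one, p.1.2), memA p⟩
      rw [eA p] at ht
      rw [ht]
      congr 1
      apply Subtype.ext
      rw [eq2]
    refine ⟨fun b => v ⟨(one, b), h1b b⟩, ⟨?_, ?_⟩, ?_⟩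
    · intro p
      rw [key p]
    · intro q
      have ht := hc ⟨(one, q.1.1, q.1.2), memB q⟩
      rw [eB q] at ht
      have hπ : (π₁ (⟨(one, q.1.1, q.1.2), memB q⟩) : X × B) = (one, g q.1.1 q.1.2) :=
        eq1 _
      show v ⟨(one, g q.1.1 q.1.2), h1b _⟩ = v q
      have h2 : (⟨(one, g q.1.1 q.1.2), h1b _⟩ : linkC1 f one zero) =
          π₁ (⟨(one, q.1.1, q.1.2), memB q⟩) := Subtype.ext hπ.symm
      rw [h2]
      have h3 : (⟨(one, ((π₁ (⟨(one, q.1.1, q.1.2), memB q⟩) : X × B)).2),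
          h1b _⟩ : linkC1 f one zero) = π₁ (⟨(one, q.1.1, q.1.2), memB q⟩) := by
        apply Subtype.ext
        rw [hπ]
      calc v (π₁ (⟨(one, q.1.1, q.1.2), memB q⟩))
          = v ⟨(one, ((π₁ (⟨(one, q.1.1, q.1.2), memB q⟩) : X × B)).2), h1b _⟩ := by
            rw [h3]
        _ = u (π₁ (⟨(one, q.1.1, q.1.2), memB q⟩)) := (key _).symm
        _ = v q := ht
    · rintro w' ⟨hw1, hw2⟩
      funext b
      have h1 := hw1 ⟨(one, b), h1b b⟩
      rw [key ⟨(one, b), h1b b⟩] at h1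
      exact h1
  · -- square 2 pullback
    apply types_isPullback_of (fun q => q.2)
    intro x y hxy
    exact ⟨⟨(y, x), hxy⟩, ⟨rfl, rfl⟩, by
      rintro ⟨⟨a, b⟩, hq⟩ ⟨h1, h2⟩
      apply Subtype.ext
      show ((a, b) : _ × _) = (y, x)
      rw [show a = y from h2, show b = x from h1]⟩
  · -- square 2 pushout
    apply types_isPushout_of (fun q => q.2)
    intro W u v hc
    -- e₁ p := (one, x, b); key fact: for t ∈ C₂, v t = u ((π₂ t).1.1, one, (π₂ t).1.2)
    have key : ∀ t : linkC2 f g one zero,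
        v t = u ⟨((π₂ t).1.1, one, (π₂ t).1.2), memA (π₂ t)⟩ := by
      intro t
      have hq : π₁ (⟨((π₂ t).1.1, one, (π₂ t).1.2), memA (π₂ t)⟩) = π₂ t := eA _
      have := hc ⟨(t, ⟨((π₂ t).1.1, one, (π₂ t).1.2), memA (π₂ t)⟩), hq⟩
      exact this.symm
    refine ⟨fun p => v ⟨(one, p.1.1, p.1.2), memB p⟩, ⟨?_, ?_⟩, ?_⟩
    · intro t
      -- goal : v (e₁ (π₁ t)) = u t
      have hq : π₁ t = π₂ (⟨(one, (π₁ t).1.1, (π₁ t).1.2), memB (π₁ t)⟩) :=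
        (eB (π₁ t)).symm
      have := hc ⟨(⟨(one, (π₁ t).1.1, (π₁ t).1.2), memB (π₁ t)⟩, t), hq⟩
      exact this.symm
    · intro t
      -- goal : v (e₁ (π₂ t)) = v t
      show v ⟨(one, (π₂ t).1.1, (π₂ t).1.2), memB (π₂ t)⟩ = v t
      have hB : π₂ (⟨(one, (π₂ t).1.1, (π₂ t).1.2), memB (π₂ t)⟩) = π₂ t := eB _
      have h4 := key (⟨(one, (π₂ t).1.1, (π₂ t).1.2), memB (π₂ t)⟩ :
        linkC2 f g one zero)
      rw [hB] at h4
      rw [h4]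
      exact (key t).symm
    · rintro w' ⟨hw1, hw2⟩
      funext p
      have := hw2 ⟨(one, p.1.1, p.1.2), memB p⟩
      rw [eB p] at this
      exact this
end

section
/- Assume conditions (⋆) and (⋆⋆) of Proposition 3, that 1̄ = 1, and that (1, b) ∈ C₁ for every b ∈ B. If (X, ·) is a semigroup (the multiplication is associative), then the involutive-2-link (θ, φ, m : C₂ → C₁) is associative: the pair (m∘φ, m∘θ) is bi-exact and the induced maps m₁, m₂ : C₃ → C₂ (determined by π₁∘m₁ = m∘p₁, π₂∘m₁ = π₂∘p₂, π₁∘m₂ = π₁∘p₁, π₂∘m₂ = m∘p₂, where π₁ = m∘φ, π₂ = m∘θ and p₁, p₂ are the pullback projections of C₃) satisfy m∘m₁ = m∘m₂. -/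
universe u

section Helpers
open CategoryTheory Limits

lemma types_isPullback {P X Y Z : Type u} (fst : P → X) (snd : P → Y)
    (f : X → Z) (g : Y → Z)
    (comm : ∀ p, f (fst p) = g (snd p))
    (inj : ∀ p p', fst p = fst p' → snd p = snd p' → p = p')
    (lift : ∀ x y, f x = g y → ∃ p, fst p = x ∧ snd p = y) :
    CategoryTheory.IsPullback (C := Type u) (TypeCat.ofHom fst) (TypeCat.ofHom snd)
      (TypeCat.ofHom f) (TypeCat.ofHom g) := by
  have hcomm : CommSq (C := Type u) (TypeCat.ofHom fst) (TypeCat.ofHom snd)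
      (TypeCat.ofHom f) (TypeCat.ofHom g) := ⟨by ext p; exact comm p⟩
  refine IsPullback.of_isLimit' hcomm ?_
  choose l hl1 hl2 using lift
  refine PullbackCone.IsLimit.mk _
    (fun s => TypeCat.ofHom fun x => l (s.fst x) (s.snd x) (types_congr_hom s.condition x))
    ?_ ?_ ?_
  · intro s; ext x; exact hl1 ..
  · intro s; ext x; exact hl2 ..
  · intro s m hm1 hm2
    ext x
    have e1 : fst (m x) = s.fst x := types_congr_hom hm1 x
    have e2 : fst (l (s.fst x) (s.snd x) (types_congr_hom s.condition x)) = s.fst x :=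
      hl1 _ _ _
    have e3 : snd (m x) = s.snd x := types_congr_hom hm2 x
    have e4 : snd (l (s.fst x) (s.snd x) (types_congr_hom s.condition x)) = s.snd x :=
      hl2 _ _ _
    exact inj _ _ (e1.trans e2.symm) (e3.trans e4.symm)

lemma types_isPushout {P X Y Z : Type u} (fst : P → X) (snd : P → Y)
    (f : X → Z) (g : Y → Z)
    (comm : ∀ p, f (fst p) = g (snd p))
    (desc : ∀ (W : Type u) (h₁ : X → W) (h₂ : Y → W),
      (∀ p, h₁ (fst p) = h₂ (snd p)) → ∃ k : Z → W,
        (∀ x, k (f x) = h₁ x) ∧ (∀ y, k (g y) = h₂ y))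
    (uniq : ∀ (W : Type u) (k k' : Z → W),
      (∀ x, k (f x) = k' (f x)) → (∀ y, k (g y) = k' (g y)) → k = k') :
    CategoryTheory.IsPushout (C := Type u) (TypeCat.ofHom fst) (TypeCat.ofHom snd)
      (TypeCat.ofHom f) (TypeCat.ofHom g) := by
  have hcomm : CommSq (C := Type u) (TypeCat.ofHom fst) (TypeCat.ofHom snd)
      (TypeCat.ofHom f) (TypeCat.ofHom g) := ⟨by ext p; exact comm p⟩
  refine IsPushout.of_isColimit' hcomm ?_
  choose k hk1 hk2 using fun (W : Type u) h₁ h₂ h => desc W h₁ h₂ h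
  refine PushoutCocone.IsColimit.mk _
    (fun s => TypeCat.ofHom (k s.pt s.inl s.inr (fun p => types_congr_hom s.condition p)))
    ?_ ?_ ?_
  · intro s; ext x; exact hk1 ..
  · intro s; ext y; exact hk2 ..
  · intro s m hm1 hm2
    apply TypeCat.homEquiv.injective
    refine uniq _ _ _ (fun x => ?_) (fun y => ?_)
    · show m (f x) = k s.pt s.inl s.inr _ (f x)
      have e1 : m (f x) = s.inl x := types_congr_hom hm1 x
      exact e1.trans (hk1 s.pt s.inl s.inr (fun p => types_congr_hom s.condition p) x).symm
    · show m (g y) = k s.pt s.inl s.inr _ (g y)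
      have e1 : m (g y) = s.inr y := types_congr_hom hm2 y
      exact e1.trans (hk2 s.pt s.inl s.inr (fun p => types_congr_hom s.condition p) y).symm

end Helpers

open CategoryTheory in
/-- Abstract form of associativity: enough structure on a parallel pair
`(m ∘ φ, m ∘ θ)` to make the link associative. -/
lemma isAssociativeLink_of {C2T C1T B0 : Type u} (θ φ : C2T → C2T) (m : C2T → C1T)
    (d c : C1T → B0) (s : B0 → C1T) (e₁ e₂ : C1T → C2T)
    (hcomm : ∀ t, d (m (φ t)) = c (m (θ t)))
    (hinj : ∀ t t', m (φ t) = m (φ t') → m (θ t) = m (θ t') → t = t')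
    (hlift : ∀ u v, d u = c v → ∃ t, m (φ t) = u ∧ m (θ t) = v)
    (he₁ : ∀ u, m (φ (e₁ u)) = u) (he₂ : ∀ v, m (θ (e₂ v)) = v)
    (hcs : ∀ b, c (s b) = b) (hds : ∀ b, d (s b) = b)
    (he₁s : ∀ u, m (θ (e₁ u)) = s (d u)) (he₂s : ∀ v, m (φ (e₂ v)) = s (c v))
    (hcomp : ∀ u v, m (φ v) = m (θ u) → ∃ w₁ w₂ : C2T,
      m (φ w₁) = m u ∧ m (θ w₁) = m (θ v) ∧
      m (φ w₂) = m (φ u) ∧ m (θ w₂) = m v ∧ m w₁ = m w₂) :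
    IsAssociativeLink θ φ m := by
  classical
  choose w₁ w₂ hw1 hw2 hw3 hw4 hw5 using hcomp
  refine ⟨B0, d, c, linkC3 (m ∘ φ) (m ∘ θ), linkP1 _ _, linkP2 _ _,
    ⟨?_, ?_⟩, ⟨?_, ?_⟩,
    (fun q => w₁ q.1.1 q.1.2 q.2), (fun q => w₂ q.1.1 q.1.2 q.2),
    funext fun q => hw1 q.1.1 q.1.2 q.2, funext fun q => hw2 q.1.1 q.1.2 q.2,
    funext fun q => hw3 q.1.1 q.1.2 q.2, funext fun q => hw4 q.1.1 q.1.2 q.2,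
    funext fun q => hw5 q.1.1 q.1.2 q.2⟩
  · -- pullback square 1
    exact types_isPullback _ _ _ _ (fun t => hcomm t) hinj (fun u v h => hlift u v h)
  · -- pushout square 1
    refine types_isPushout _ _ _ _ (fun t => hcomm t) ?_ ?_
    · intro W h₁ h₂ hrel
      have hrel' : ∀ t, h₁ (m (φ t)) = h₂ (m (θ t)) := fun t => hrel t
      refine ⟨fun b => h₂ (s b), fun u => ?_, fun v => ?_⟩
      · have h := hrel' (e₁ u)
        rw [he₁, he₁s] at h
        exact h.symm
      · have h1 := hrel' (e₂ v)
        rw [he₂, he₂s] at h1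
        have h2 := hrel' (e₁ (s (c v)))
        rw [he₁, he₁s, hds] at h2
        exact h2.symm.trans h1
    · intro W k k' hkd hkc
      funext b
      have h := hkc (s b)
      rwa [show c (s b) = b from hcs b] at h
  · -- pullback square 2
    refine types_isPullback _ _ _ _ (fun q => q.2) ?_ ?_
    · intro q q' h2 h1
      refine Subtype.ext ?_
      have h1' : q.1.1 = q'.1.1 := h1
      have h2' : q.1.2 = q'.1.2 := h2
      calc q.1 = (q.1.1, q.1.2) := rfl
        _ = (q'.1.1, q'.1.2) := by rw [h1', h2']
        _ = q'.1 := rfl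
    · intro u v h
      exact ⟨⟨(v, u), h⟩, rfl, rfl⟩
  · -- pushout square 2
    refine types_isPushout _ _ _ _ (fun q => q.2) ?_ ?_
    · intro W h₁ h₂ hrel
      have hrel' : ∀ u v, m (φ v) = m (θ u) → h₁ v = h₂ u :=
        fun u v h => hrel ⟨(u, v), h⟩
      refine ⟨fun c0 => h₂ (e₂ c0), fun x => ?_, fun y => ?_⟩
      · exact (hrel' (e₂ (m (φ x))) x (by rw [he₂])).symm
      · have h1 : h₁ (e₁ (m (θ y))) = h₂ y := hrel' y (e₁ (m (θ y))) (he₁ _)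
        have h2 : h₁ (e₁ (m (θ y))) = h₂ (e₂ (m (θ y))) :=
          hrel' (e₂ (m (θ y))) (e₁ (m (θ y))) (by rw [he₁, he₂])
        exact h2.symm.trans h1
    · intro W k k' hk1 hk2
      funext c0
      have h := hk2 (e₂ c0)
      rwa [show (m ∘ θ) (e₂ c0) = c0 from he₂ c0] at h

/-- **Proposition 4** (second part). Assuming (⋆), (⋆⋆), `1̄ = 1`,
`(1, b) ∈ C₁` for every `b`, and that `(X, ·)` is a semigroup, the triple
`(θ, φ, m : C₂ → C₁)` is an associative involutive-2-link. -/
theorem link_associative_of_semigroup {X B : Type u} (mul : X → X → X)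
    (one : X) (zero : B) (bar : X → X) (f : X → B → X → B → X) (g : X → B → B)
    (hf : ∀ y x b y' x' b', f (mul y x) b (mul y' x') b' =
      mul (f y (g x b) y' (g x' b')) (f x b x' b'))
    (hg : ∀ y x b, g (mul y x) b = g y (g x b))
    (hg10 : g one zero = zero) (h11 : mul one one = one)
    (hiv : ∀ x y b, g (mul (bar x) (mul (bar y) (mul y x))) b = b)
    (hiv' : ∀ x b, g (mul (bar x) x) b = b)
    (hstar : ∀ x b, ((x, b) : X × B) ∈ linkC1 f one zero →
      ((bar x, g x b) : X × B) ∈ linkC1 f one zero ∧ bar (bar x) = x)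
    (hstarstar : ∀ t ∈ linkC2 f g one zero,
      mul (bar t.1) (mul t.1 t.2.1) = t.2.1 ∧
      mul (mul t.1 t.2.1) (bar t.2.1) = t.1 ∧
      mul t.2.1 (bar (mul t.1 t.2.1)) = bar t.1 ∧
      mul (bar (mul t.1 t.2.1)) t.1 = bar t.2.1)
    (hbar1 : bar one = one)
    (h1b : ∀ b, ((one, b) : X × B) ∈ linkC1 f one zero)
    (hassoc : ∀ a b c : X, mul (mul a b) c = mul a (mul b c)) :
    ∀ (hm : ∀ t ∈ linkC2 f g one zero, linkM mul t ∈ linkC1 f one zero)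
      (hθc : ∀ t ∈ linkC2 f g one zero, linkθ mul bar t ∈ linkC2 f g one zero)
      (hφc : ∀ t ∈ linkC2 f g one zero, linkφ mul bar g t ∈ linkC2 f g one zero),
      IsAssociativeLink (linkθS mul bar hθc) (linkφS mul bar hφc)
        (linkMS mul hm) := by
  intro hm hθc hφc
  have g1b : ∀ b, g one b = b := fun b => by
    have h := hiv' one b; rwa [hbar1, h11] at h
  have hπ₁ : ∀ t : ↥(linkC2 f g one zero),
      (linkMS mul hm (linkφS mul bar hφc t)).1 = (t.1.1, g t.1.2.1 t.1.2.2) := by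
    intro t
    show (mul (mul t.1.1 t.1.2.1) (bar t.1.2.1),
      g (mul (bar t.1.1) (mul t.1.1 t.1.2.1)) t.1.2.2) = _
    rw [(hstarstar t.1 t.2).2.1, (hstarstar t.1 t.2).1]
  have hπ₂ : ∀ t : ↥(linkC2 f g one zero),
      (linkMS mul hm (linkθS mul bar hθc t)).1 = (t.1.2.1, t.1.2.2) := by
    intro t
    show (mul (bar t.1.1) (mul t.1.1 t.1.2.1), t.1.2.2) = _
    rw [(hstarstar t.1 t.2).1]
  have me₁ : ∀ u : ↥(linkC1 f one zero),
      ((u.1.1, one, u.1.2) : X × X × B) ∈ linkC2 f g one zero :=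
    fun u => ⟨by rw [g1b]; exact u.2, h1b u.1.2⟩
  have me₂ : ∀ v : ↥(linkC1 f one zero),
      ((one, v.1.1, v.1.2) : X × X × B) ∈ linkC2 f g one zero :=
    fun v => ⟨h1b _, v.2⟩
  refine isAssociativeLink_of _ _ _ (fun p => p.1.2) (fun p => g p.1.1 p.1.2)
    (fun b => ⟨(one, b), h1b b⟩) (fun u => ⟨_, me₁ u⟩) (fun v => ⟨_, me₂ v⟩)
    ?_ ?_ ?_ ?_ ?_ ?_ ?_ ?_ ?_ ?_
  · -- hcomm
    intro t
    show (linkMS mul hm (linkφS mul bar hφc t)).1.2 =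
      g (linkMS mul hm (linkθS mul bar hθc t)).1.1
        (linkMS mul hm (linkθS mul bar hθc t)).1.2
    rw [hπ₁ t, hπ₂ t]
  · -- hinj
    intro t t' h1 h2
    have e1 := congrArg Subtype.val h1
    rw [hπ₁ t, hπ₁ t'] at e1
    have e2 := congrArg Subtype.val h2
    rw [hπ₂ t, hπ₂ t'] at e2
    injection e1 with h1' _
    have h2' : t.1.2 = t'.1.2 := e2
    refine Subtype.ext ?_
    calc t.1 = (t.1.1, t.1.2) := rfl
      _ = (t'.1.1, t'.1.2) := by rw [h1', h2']
      _ = t'.1 := rfl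
  · -- hlift
    intro u v h
    have h' : u.1.2 = g v.1.1 v.1.2 := h
    refine ⟨⟨(u.1.1, v.1.1, v.1.2), ?_, v.2⟩, ?_, ?_⟩
    · show (u.1.1, g v.1.1 v.1.2) ∈ linkC1 f one zero
      rw [← h']; exact u.2
    · refine Subtype.ext ?_
      rw [hπ₁]
      show (u.1.1, g v.1.1 v.1.2) = u.1
      rw [← h']
    · refine Subtype.ext ?_
      rw [hπ₂]
  · -- he₁
    intro u
    refine Subtype.ext ?_
    rw [hπ₁]
    show (u.1.1, g one u.1.2) = u.1
    rw [g1b]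
  · -- he₂
    intro v
    refine Subtype.ext ?_
    rw [hπ₂]
  · -- hcs
    intro b
    exact g1b b
  · -- hds
    intro b
    rfl
  · -- he₁s
    intro u
    refine Subtype.ext ?_
    rw [hπ₂]
  · -- he₂s
    intro v
    refine Subtype.ext ?_
    rw [hπ₁]
  · -- hcomp
    intro u v h
    have hval := congrArg Subtype.val h
    rw [hπ₁ v, hπ₂ u] at hval
    have hc1 : v.1.1 = u.1.2.1 := congrArg Prod.fst hval
    have hc2 : g v.1.2.1 v.1.2.2 = u.1.2.2 := congrArg Prod.snd hval
    have mw1 : ((mul u.1.1 u.1.2.1, v.1.2.1, v.1.2.2) : X × X × B) ∈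
        linkC2 f g one zero := by
      refine ⟨?_, v.2.2⟩
      show (mul u.1.1 u.1.2.1, g v.1.2.1 v.1.2.2) ∈ linkC1 f one zero
      rw [hc2]
      exact hm u.1 u.2
    have mw2 : ((u.1.1, mul v.1.1 v.1.2.1, v.1.2.2) : X × X × B) ∈
        linkC2 f g one zero := by
      refine ⟨?_, hm v.1 v.2⟩
      show (u.1.1, g (mul v.1.1 v.1.2.1) v.1.2.2) ∈ linkC1 f one zero
      rw [hg, hc2, hc1]
      exact u.2.1
    refine ⟨⟨_, mw1⟩, ⟨_, mw2⟩, ?_, ?_, ?_, ?_, ?_⟩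
    · refine Subtype.ext ?_
      rw [hπ₁]
      show (mul u.1.1 u.1.2.1, g v.1.2.1 v.1.2.2) =
        (mul u.1.1 u.1.2.1, u.1.2.2)
      rw [hc2]
    · refine Subtype.ext ?_
      rw [hπ₂ ⟨_, mw1⟩, hπ₂ v]
    · refine Subtype.ext ?_
      rw [hπ₁ ⟨_, mw2⟩, hπ₁ u]
      show (u.1.1, g (mul v.1.1 v.1.2.1) v.1.2.2) = _
      rw [hg, hc2, hc1]
    · refine Subtype.ext ?_
      rw [hπ₂]
      rfl
    · refine Subtype.ext ?_
      show (mul (mul u.1.1 u.1.2.1) v.1.2.1, v.1.2.2) =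
        (mul u.1.1 (mul v.1.1 v.1.2.1), v.1.2.2)
      rw [hassoc, hc1]
end
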